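/- Let G be a good finite abelian group of order n and let p be a proper odd prime divisor of n (that is, p is an odd prime with p | n and p < n). Then for every subgroup H of G with |H| = n/p there exists an inverse-closed subset S of G∖{0} with |S| = p − 1 such that every coset of H is a perfect code in the Cayley graph Cay(G, S). -/

import Mathlib

/-- The Cayley graph of an additive group `G` with connection set `S`.
(When `S` is inverse-closed and does not contain `0`, `x` and `y` are adjacent
iff `y - x ∈ S`.) -/
def cayley {G : Type*} [AddGroup G] (S : Set G) : SimpleGraph G :=
  SimpleGraph.fromRel (fun x y => y - x ∈ S)

/-- A perfect code in a graph: an independent set such that every vertex outside it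
has exactly one neighbour in it. -/
def IsPerfectCode {V : Type*} (Γ : SimpleGraph V) (C : Set V) : Prop :=
  (∀ x ∈ C, ∀ y ∈ C, ¬ Γ.Adj x y) ∧ ∀ v, v ∉ C → ∃! c, c ∈ C ∧ Γ.Adj v c

/-- A total perfect code in a graph: every vertex has exactly one neighbour in it. -/
def IsTotalPerfectCode {V : Type*} (Γ : SimpleGraph V) (C : Set V) : Prop :=
  ∀ v, ∃! c, c ∈ C ∧ Γ.Adj v c

/-- The subgroup of periods of a subset `X` of an abelian group:
`{g | X + g = X}`. -/
def periods {G : Type*} [AddCommGroup G] (X : Set G) : AddSubgroup G where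
  carrier := {g | ∀ x : G, x + g ∈ X ↔ x ∈ X}
  zero_mem' := by simp
  add_mem' := by
    intro a b ha hb x
    rw [← add_assoc]
    exact (hb _).trans (ha x)
  neg_mem' := by
    intro a ha x
    have := ha (x + -a)
    simpa using this.symm

/-- `(A, B)` is a factorization of the abelian group `G`: every element of `G` can be
uniquely written as `a + b` with `a ∈ A` and `b ∈ B`. -/
def IsFactorization {G : Type*} [AddCommGroup G] (A B : Set G) : Prop :=
  ∀ g : G, ∃! ab : G × G, ab.1 ∈ A ∧ ab.2 ∈ B ∧ ab.1 + ab.2 = g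

/-- An abelian group is good if in every factorization of it into two factors
at least one factor is periodic. -/
def IsGood (G : Type*) [AddCommGroup G] : Prop :=
  ∀ A B : Set G, IsFactorization A B → periods A ≠ ⊥ ∨ periods B ≠ ⊥

/-- Theorem 3.1(a): let `G` be a good finite abelian group of order `n` and `p`
a proper odd prime divisor of `n`. Then for every subgroup `H` of `G` of order
`n/p` there is an inverse-closed subset `S` of `G ∖ {0}` with `|S| = p - 1`
such that every coset of `H` is a perfect code in `Cay(G, S)`. -/
theorem coset_perfectCode_of_good {G : Type*} [AddCommGroup G] [Fintype G]
    (n p : ℕ) (hn : Nat.card G = n) (hgood : IsGood G)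
    (hp : p.Prime) (hodd : Odd p) (hdvd : p ∣ n) (hlt : p < n)
    (H : AddSubgroup G) (hH : Nat.card H = n / p) :
    ∃ S : Set G, (0 : G) ∉ S ∧ (∀ s ∈ S, -s ∈ S) ∧ S.ncard = p - 1 ∧
      ∀ g : G, IsPerfectCode (cayley S) ((g + ·) '' (H : Set G)) := by
  classical
  set Q := G ⧸ H with hQdef
  have hn0 : 0 < n := hn ▸ Nat.card_pos
  have hp0 : 0 < p := hp.pos
  have hnp0 : 0 < n / p := Nat.div_pos (Nat.le_of_dvd hn0 hdvd) hp0
  have hcardQ : Nat.card Q = p := by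
    have h1 : Nat.card G = Nat.card Q * Nat.card H :=
      AddSubgroup.card_eq_card_quotient_mul_card_addSubgroup H
    rw [hn, hH] at h1
    have h2 : n = p * (n / p) := (Nat.mul_div_cancel' hdvd).symm
    exact (Nat.eq_of_mul_eq_mul_right hnp0 (h1.symm.trans h2).symm).symm
  have two_ne : ∀ q : Q, q ≠ 0 → -q ≠ q := by
    intro q hq hcontra
    apply hq
    have hord : addOrderOf q ∣ p := hcardQ ▸ addOrderOf_dvd_natCard q
    have h2 : q + q = 0 := by
      have : q + -q = 0 := add_neg_cancel q
      rwa [hcontra] at this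
    have hord2 : addOrderOf q ∣ 2 := by
      apply addOrderOf_dvd_of_nsmul_eq_zero
      simpa [two_nsmul] using h2
    have hgcd : Nat.gcd 2 p = 1 := by
      rw [Nat.gcd_rec, Nat.odd_iff.mp hodd]
      rfl
    have : addOrderOf q ∣ 1 := hgcd ▸ Nat.dvd_gcd hord2 hord
    exact AddMonoid.addOrderOf_eq_one_iff.mp (Nat.dvd_one.mp this)
  -- a tie-breaking injection into ℕ
  haveI : Fintype Q := Fintype.ofFinite Q
  let enc : Q → ℕ := fun q => (Fintype.equivFin Q q : ℕ)
  have henc : Function.Injective enc := fun a b h =>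
    (Fintype.equivFin Q).injective (Fin.ext h)
  -- a section of the quotient map satisfying σ (-q) = -σ q
  let σ : Q → G := fun q => if enc q < enc (-q) then q.out else -(-q).out
  have hmkσ : ∀ q : Q, ((σ q : G) : Q) = q := by
    intro q
    by_cases h : enc q < enc (-q)
    · simp only [σ, if_pos h]
      exact QuotientAddGroup.out_eq' q
    · simp only [σ, if_neg h]
      rw [QuotientAddGroup.mk_neg, QuotientAddGroup.out_eq', neg_neg]
  have hσinj : Function.Injective σ := fun a b h => by
    rw [← hmkσ a, ← hmkσ b, h]
  have hnegσ : ∀ q : Q, q ≠ 0 → σ (-q) = -σ q := by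
    intro q hq
    have hne : enc q ≠ enc (-q) := fun h => two_ne q hq (henc h).symm
    by_cases h : enc q < enc (-q)
    · have h2 : ¬ enc (-q) < enc (-(-q)) := by rw [neg_neg]; omega
      simp only [σ, if_pos h, if_neg h2, neg_neg]
      rw [neg_neg]
    · have h' : enc (-q) < enc q := by omega
      have h2 : enc (-q) < enc (-(-q)) := by rwa [neg_neg]
      simp only [σ, if_pos h2, if_neg h]
      rw [neg_neg]
  set S : Set G := σ '' {q : Q | q ≠ 0} with hSdef
  have hmem : ∀ x : G, x ∈ S ↔ ((x : Q) ≠ 0 ∧ x = σ (x : Q)) := by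
    intro x
    constructor
    · rintro ⟨q, hq, rfl⟩
      rw [hmkσ]
      exact ⟨hq, rfl⟩
    · rintro ⟨h0, hx⟩
      exact ⟨(x : Q), h0, hx.symm⟩
  have hS0 : (0 : G) ∉ S := by
    intro h
    exact ((hmem 0).mp h).1 (by simp)
  have hSneg : ∀ s ∈ S, -s ∈ S := by
    rintro s ⟨q, hq, rfl⟩
    exact ⟨-q, neg_ne_zero.mpr hq, hnegσ q hq⟩
  have hScard : S.ncard = p - 1 := by
    rw [hSdef, Set.ncard_image_of_injective _ hσinj]
    have : {q : Q | q ≠ 0} = Set.univ \ {0} := by ext; simp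
    rw [this, Set.ncard_diff (by simp), Set.ncard_univ, Set.ncard_singleton, hcardQ]
  have hadj : ∀ x y : G, (cayley S).Adj x y ↔ y - x ∈ S := by
    intro x y
    rw [cayley, SimpleGraph.fromRel_adj]
    constructor
    · rintro ⟨hne, h | h⟩
      · exact h
      · simpa using hSneg _ h
    · intro h
      refine ⟨fun hxy => ?_, Or.inl h⟩
      subst hxy
      simp only [sub_self] at h
      exact hS0 h
  have hcos : ∀ g v : G, v ∈ (g + ·) '' (H : Set G) ↔ (v : Q) = (g : Q) := by
    intro g v
    constructor
    · rintro ⟨h, hh, rfl⟩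
      rw [QuotientAddGroup.eq_iff_sub_mem]
      simpa using hh
    · intro h
      refine ⟨v - g, ?_, by simp⟩
      have := QuotientAddGroup.eq_iff_sub_mem.mp h
      exact this
  refine ⟨S, hS0, hSneg, hScard, fun g => ⟨?_, ?_⟩⟩
  · intro x hx y hy hadjxy
    rw [hadj] at hadjxy
    refine ((hmem _).mp hadjxy).1 ?_
    rw [QuotientAddGroup.mk_sub, (hcos g x).mp hx, (hcos g y).mp hy, sub_self]
  · intro v hv
    have hvq : (v : Q) ≠ (g : Q) := fun h => hv ((hcos g v).mpr h)
    set q : Q := (g : Q) - (v : Q) with hq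
    have hq0 : q ≠ 0 := sub_ne_zero.mpr (Ne.symm hvq)
    have hcmem : v + σ q ∈ (g + ·) '' (H : Set G) := by
      rw [hcos, QuotientAddGroup.mk_add, hmkσ, hq]
      abel
    refine ⟨v + σ q, ⟨hcmem, ?_⟩, ?_⟩
    · rw [hadj, add_sub_cancel_left]
      exact ⟨q, hq0, rfl⟩
    · rintro c ⟨hc, hcadj⟩
      rw [hadj] at hcadj
      obtain ⟨hne0, heq⟩ := (hmem _).mp hcadj
      have hmkcv : ((c - v : G) : Q) = q := by
        rw [QuotientAddGroup.mk_sub, (hcos g c).mp hc, hq]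
      have : c - v = σ q := by rw [heq, hmkcv]
      rw [sub_eq_iff_eq_add] at this
      rw [this, add_comm]
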